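/- For any ε > 0, p ∈ ℕ, and k ∈ ℕ, the boundary integral ∫ over the torus {|z₀| = ε} × {|z₁| = ε} × ... × {|z_k| = ε} of the form (ln|ln|z₀||)^p |dz₀|/(|z₀| |ln|z₀||) · Π_{i=1}^k (ln|ln|z_i||)^p i dz_i dz̄_i / |z_i ln|z_i||² tends to 0 as ε → 0⁺. -/

import Mathlib

open MeasureTheory Set Filter

noncomputable def Faux (p : ℕ) (r : ℝ) : ℝ :=
  (Real.log |Real.log r|) ^ p * 2 / (r * Real.log r) ^ 2

lemma aux_log_pow_integrable (p : ℕ) :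
    IntegrableOn (fun u : ℝ => 2 * Real.log u ^ p / u ^ 2) (Set.Ioi 1) := by
  set C : ℝ := 2 * (2 * ((p : ℝ) + 1)) ^ p with hC
  have hint : IntegrableOn (fun u : ℝ => C * u ^ (-(3/2) : ℝ)) (Set.Ioi 1) :=
    (integrableOn_Ioi_rpow_of_lt (by norm_num) one_pos).const_mul C
  refine Integrable.mono' hint ?_ ?_
  · exact ((measurable_const.mul (Real.measurable_log.pow_const p)).div
      (measurable_id.pow_const 2)).aestronglyMeasurable
  · rw [ae_restrict_iff' measurableSet_Ioi]
    filter_upwards with u hu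
    have hu1 : (1 : ℝ) < u := hu
    have hu0 : (0 : ℝ) < u := lt_trans one_pos hu1
    have hlog0 : 0 ≤ Real.log u := Real.log_nonneg hu1.le
    have hδ : (0 : ℝ) < (2 * ((p : ℝ) + 1))⁻¹ := by positivity
    have h1 : Real.log u ≤ (2 * ((p : ℝ) + 1)) * u ^ ((2 * ((p : ℝ) + 1))⁻¹ : ℝ) := by
      have h := Real.log_le_rpow_div hu0.le hδ
      rwa [div_eq_mul_inv, inv_inv, mul_comm] at h
    have h2 : Real.log u ^ p ≤ ((2 * ((p : ℝ) + 1)) * u ^ ((2 * ((p : ℝ) + 1))⁻¹ : ℝ)) ^ p :=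
      pow_le_pow_left₀ hlog0 h1 p
    have h3 : ((2 * ((p : ℝ) + 1)) * u ^ ((2 * ((p : ℝ) + 1))⁻¹ : ℝ)) ^ p
        = (2 * ((p : ℝ) + 1)) ^ p * u ^ ((2 * ((p : ℝ) + 1))⁻¹ * p : ℝ) := by
      rw [mul_pow, ← Real.rpow_natCast (u ^ ((2 * ((p : ℝ) + 1))⁻¹ : ℝ)) p,
        ← Real.rpow_mul hu0.le]
    have h4 : u ^ ((2 * ((p : ℝ) + 1))⁻¹ * p : ℝ) ≤ u ^ ((1:ℝ)/2) := by
      apply Real.rpow_le_rpow_of_exponent_le hu1.le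
      rw [inv_mul_eq_div, div_le_div_iff₀ (by positivity) two_pos]
      nlinarith [Nat.cast_nonneg (α := ℝ) p]
    have h5 : Real.log u ^ p ≤ (2 * ((p : ℝ) + 1)) ^ p * u ^ ((1:ℝ)/2) := by
      refine le_trans h2 ?_
      rw [h3]
      exact mul_le_mul_of_nonneg_left h4 (by positivity)
    have hnn : 0 ≤ 2 * Real.log u ^ p / u ^ 2 := by positivity
    rw [Real.norm_of_nonneg hnn]
    have hu2 : (u:ℝ) ^ 2 = u ^ (2:ℝ) := by
      rw [← Real.rpow_natCast u 2]; norm_num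
    calc 2 * Real.log u ^ p / u ^ 2
        ≤ 2 * ((2 * ((p : ℝ) + 1)) ^ p * u ^ ((1:ℝ)/2)) / u ^ 2 := by
          apply div_le_div_of_nonneg_right ?_ (by positivity)
          · linarith
      _ = C * u ^ (-(3/2) : ℝ) := by
          rw [hu2, show (-(3/2) : ℝ) = (1:ℝ)/2 - 2 by norm_num, Real.rpow_sub hu0]
          rw [Real.rpow_two]
          ring

lemma aux_1d (p : ℕ) :
    IntegrableOn (fun r => r * Faux p r) (Set.Ioo 0 (Real.exp (-1))) := by
  have himg : (fun u : ℝ => Real.exp (-u)) '' (Set.Ioi 1) = Set.Ioo 0 (Real.exp (-1)) := by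
    ext y
    constructor
    · rintro ⟨u, hu, rfl⟩
      exact ⟨Real.exp_pos _, Real.exp_lt_exp.2 (by simpa using hu)⟩
    · rintro ⟨h0, h1⟩
      refine ⟨-Real.log y, ?_, by simp [Real.exp_log h0]⟩
      have h := Real.log_lt_log h0 h1
      rw [Real.log_exp] at h
      simpa using by linarith
  have hinj : Set.InjOn (fun u : ℝ => Real.exp (-u)) (Set.Ioi 1) := fun a _ b _ h => by
    have := Real.exp_injective h
    linarith [neg_injective this]
  rw [← himg, integrableOn_image_iff_integrableOn_abs_deriv_smul measurableSet_Ioi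
      (f' := fun u => -Real.exp (-u))
      (fun u _ => by
        exact ((Real.hasDerivAt_exp (-u)).comp u ((hasDerivAt_id u).neg)).hasDerivWithinAt.congr_deriv (by ring))
      hinj]
  apply (aux_log_pow_integrable p).congr_fun ?_ measurableSet_Ioi
  intro u hu
  have hu1 : (1:ℝ) < u := hu
  have hu0 : (0:ℝ) < u := lt_trans one_pos hu1
  have he : Real.exp (-u) ≠ 0 := (Real.exp_pos _).ne'
  have habs : |Real.log (Real.exp (-u))| = u := by
    rw [Real.log_exp, abs_neg, abs_of_pos hu0]
  simp only [smul_eq_mul, Faux, habs, Real.log_exp, abs_neg, abs_of_pos (Real.exp_pos (-u))]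
  field_simp
  ring
  rw [abs_of_pos hu0]

lemma aux_2d (p : ℕ) :
    IntegrableOn (fun z : ℂ => Faux p ‖z‖)
      {z : ℂ | 0 < ‖z‖ ∧ ‖z‖ < Real.exp (-1)} := by
  set r₀ : ℝ := Real.exp (-1) with hr₀
  set g : ℝ × ℝ → ℝ := fun q => Faux p (Real.sqrt (q.1 ^ 2 + q.2 ^ 2)) with hg
  set T : Set (ℝ × ℝ) :=
    {q : ℝ × ℝ | 0 < Real.sqrt (q.1 ^ 2 + q.2 ^ 2) ∧ Real.sqrt (q.1 ^ 2 + q.2 ^ 2) < r₀}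
      with hT
  have hTmeas : MeasurableSet T := by
    apply MeasurableSet.inter
    · exact measurableSet_lt measurable_const
        (((measurable_fst.pow_const 2).add (measurable_snd.pow_const 2)).sqrt)
    · exact measurableSet_lt
        (((measurable_fst.pow_const 2).add (measurable_snd.pow_const 2)).sqrt) measurable_const
  have hnormeq : ∀ z : ℂ, ‖z‖ = Real.sqrt (z.re ^ 2 + z.im ^ 2) := by
    intro z
    rw [Complex.norm_def, Complex.normSq_apply]
    ring_nf
  have hpre : Complex.measurableEquivRealProd ⁻¹' T
      = {z : ℂ | 0 < ‖z‖ ∧ ‖z‖ < r₀} := by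
    ext z
    have h1 : (Complex.measurableEquivRealProd z).1 = z.re := rfl
    have h2 : (Complex.measurableEquivRealProd z).2 = z.im := rfl
    simp only [Set.mem_preimage, hT, Set.mem_setOf_eq, h1, h2, ← hnormeq z]
  -- reduce to T
  have hTi : IntegrableOn g T := by
    -- polar coordinates
    set s : Set (ℝ × ℝ) := Set.Ioo 0 r₀ ×ˢ Set.Ioo (-Real.pi) Real.pi with hs
    have hsmeas : MeasurableSet s := measurableSet_Ioo.prod measurableSet_Ioo
    have hsub : s ⊆ polarCoord.target :=
      Set.prod_mono Set.Ioo_subset_Ioi_self subset_rfl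
    have himg : polarCoord.symm '' s = polarCoord.source ∩ polarCoord ⁻¹' s :=
      polarCoord.symm_image_eq_source_inter_preimage hsub
    have himg2 : polarCoord.symm '' s = T ∩ polarCoord.source := by
      rw [himg]
      ext q
      have hq : polarCoord q
          = (Real.sqrt (q.1^2+q.2^2), Complex.arg (Complex.equivRealProd.symm q)) := rfl
      have hre : (Complex.equivRealProd.symm q).re = q.1 := rfl
      have him : (Complex.equivRealProd.symm q).im = q.2 := rfl
      simp only [Set.mem_inter_iff, Set.mem_preimage, hq, hs, Set.prodMk_mem_set_prod_eq,
        Set.mem_Ioo, hT, Set.mem_setOf_eq]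
      constructor
      · rintro ⟨hsrc, ⟨ha, hb⟩, _⟩
        exact ⟨⟨ha, hb⟩, hsrc⟩
      · rintro ⟨⟨ha, hb⟩, hsrc⟩
        refine ⟨hsrc, ⟨ha, hb⟩, Complex.neg_pi_lt_arg _, ?_⟩
        rw [Complex.arg_lt_pi_iff]
        rcases hsrc with h | h
        · exact Or.inl (le_of_lt (by rwa [hre]))
        · exact Or.inr (by rwa [him])
    have hnull : volume ((Set.univ : Set ℝ) ×ˢ ({0} : Set ℝ)) = 0 := by
      rw [Measure.volume_eq_prod, Measure.prod_prod]
      simp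
    have hae : (T : Set (ℝ × ℝ)) =ᵐ[volume] ((T ∩ polarCoord.source : Set (ℝ × ℝ))) := by
      rw [MeasureTheory.ae_eq_set]
      constructor
      · refine measure_mono_null ?_ hnull
        rintro q ⟨hqT, hqs⟩
        refine ⟨Set.mem_univ _, ?_⟩
        by_contra hcon
        exact hqs ⟨hqT, Or.inr hcon⟩
      · have hempty : (T ∩ polarCoord.source) \ T = ∅ := by
          rw [Set.diff_eq_empty]
          exact Set.inter_subset_left
        rw [hempty]
        exact measure_empty
    suffices himgint : IntegrableOn g (polarCoord.symm '' s) by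
      rw [IntegrableOn, Measure.restrict_congr_set hae, ← himg2]
      exact himgint
    set B : ℝ × ℝ → ℝ × ℝ →L[ℝ] ℝ × ℝ := fun q =>
      LinearMap.toContinuousLinearMap (Matrix.toLin (Module.Basis.finTwoProd ℝ) (Module.Basis.finTwoProd ℝ)
        !![Real.cos q.2, -q.1 * Real.sin q.2; Real.sin q.2, q.1 * Real.cos q.2]) with hB
    have hBdet : ∀ q : ℝ × ℝ, (B q).det = q.1 := by
      intro q
      conv_rhs => rw [← one_mul q.1, ← Real.cos_sq_add_sin_sq q.2]
      simp only [hB, neg_mul, LinearMap.det_toContinuousLinearMap, LinearMap.det_toLin,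
        Matrix.det_fin_two_of, sub_neg_eq_add]
      ring
    have hderiv : ∀ q ∈ s, HasFDerivWithinAt polarCoord.symm (B q) s q := fun q _ =>
      (hasFDerivAt_polarCoord_symm q).hasFDerivWithinAt
    have hinj : Set.InjOn polarCoord.symm s := polarCoord.symm.injOn.mono hsub
    rw [integrableOn_image_iff_integrableOn_abs_det_fderiv_smul volume hsmeas hderiv hinj]
    have hprod : Integrable (fun q : ℝ × ℝ => (q.1 * Faux p q.1) * (1:ℝ))
        ((volume.restrict (Set.Ioo (0:ℝ) r₀)).prod
          (volume.restrict (Set.Ioo (-Real.pi) Real.pi))) :=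
      (aux_1d p).mul_prod (integrable_const 1)
    rw [Measure.prod_restrict, ← Measure.volume_eq_prod] at hprod
    have hprod' : IntegrableOn (fun q : ℝ × ℝ => (q.1 * Faux p q.1) * (1:ℝ)) s := hprod
    refine IntegrableOn.congr_fun hprod' ?_ hsmeas
    rintro ⟨r, θ⟩ hq
    have hr : 0 < r := hq.1.1
    have hsq : (r * Real.cos θ) ^ 2 + (r * Real.sin θ) ^ 2 = r ^ 2 := by
      have := Real.sin_sq_add_cos_sq θ
      nlinarith [this]
    have hsymm : polarCoord.symm (r, θ) = (r * Real.cos θ, r * Real.sin θ) := rfl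
    simp only [mul_one, smul_eq_mul, hBdet, abs_of_pos hr, hsymm, hg, hsq,
      Real.sqrt_sq hr.le]
  have hMP := (Complex.volume_preserving_equiv_real_prod.restrict_preimage hTmeas)
  have hcomp := hMP.integrable_comp_emb
    Complex.measurableEquivRealProd.measurableEmbedding (g := g)
  rw [← hpre, IntegrableOn]
  have hfun : g ∘ Complex.measurableEquivRealProd = fun z : ℂ => Faux p ‖z‖ := by
    funext z
    simp only [Function.comp_apply, hg]
    exact congrArg (Faux p) (hnormeq z).symm
  rw [← hfun]
  exact hcomp.2 hTi

/-- The Stokes boundary estimate: the product of the circle integral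
`∫_{|z₀|=ε} (ln|ln|z₀||)^p |dz₀|/(|z₀||ln|z₀||)` (parametrized by arclength, `|z₀| = ε`)
with `k` disc-measure factors `∫_{|z_i|<ε} (ln|ln|z_i||)^p i dz_i∧dz̄_i / |z_i ln|z_i||²`
tends to `0` as `ε → 0⁺`. -/
theorem stmt18 (p k : ℕ) :
    Filter.Tendsto
      (fun ε : ℝ =>
        (∫ _θ in (0 : ℝ)..(2 * Real.pi),
            (Real.log |Real.log ε|) ^ p / (ε * |Real.log ε|) * ε) *
        (∫ z in {z : ℂ | 0 < ‖z‖ ∧ ‖z‖ < ε},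
            (Real.log |Real.log ‖z‖|) ^ p * 2 / (‖z‖ * Real.log ‖z‖) ^ 2) ^ k)
      (nhdsWithin 0 (Set.Ioi 0)) (nhds 0) := by
  have hfi : IntegrableOn (fun z : ℂ => (Real.log |Real.log ‖z‖|) ^ p * 2
      / (‖z‖ * Real.log ‖z‖) ^ 2) {z : ℂ | 0 < ‖z‖ ∧ ‖z‖ < Real.exp (-1)} := aux_2d p
  have hr₀pos : (0:ℝ) < Real.exp (-1) := Real.exp_pos _
  have hr₀lt1 : Real.exp (-1) < 1 := by
    have := Real.exp_lt_exp.2 (show (-1:ℝ) < 0 by norm_num)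
    rwa [Real.exp_zero] at this
  have hfn : ∀ z : ℂ, 0 < ‖z‖ → ‖z‖ < Real.exp (-1) →
      0 ≤ (Real.log |Real.log ‖z‖|) ^ p * 2 / (‖z‖ * Real.log ‖z‖) ^ 2 := by
    intro z h0 h1
    have hlog : Real.log ‖z‖ < -1 := by
      have := Real.log_lt_log h0 h1
      rwa [Real.log_exp] at this
    have habs : (1:ℝ) ≤ |Real.log ‖z‖| := by
      rw [abs_of_neg (by linarith)]
      linarith
    have h2 : 0 ≤ Real.log |Real.log ‖z‖| := Real.log_nonneg habs
    positivity
  have hmeasε : ∀ ε : ℝ, MeasurableSet {z : ℂ | 0 < ‖z‖ ∧ ‖z‖ < ε} := fun ε =>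
    ((isOpen_lt continuous_const continuous_norm).inter
      (isOpen_lt continuous_norm continuous_const)).measurableSet
  set C : ℝ := ∫ z in {z : ℂ | 0 < ‖z‖ ∧ ‖z‖ < Real.exp (-1)},
      (Real.log |Real.log ‖z‖|) ^ p * 2 / (‖z‖ * Real.log ‖z‖) ^ 2 with hC
  have hBbound : ∀ ε ∈ Set.Ioc (0:ℝ) (Real.exp (-1)),
      ‖(∫ z in {z : ℂ | 0 < ‖z‖ ∧ ‖z‖ < ε},
          (Real.log |Real.log ‖z‖|) ^ p * 2 / (‖z‖ * Real.log ‖z‖) ^ 2) ^ k‖ ≤ C ^ k := by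
    intro ε hε
    have hsub : {z : ℂ | 0 < ‖z‖ ∧ ‖z‖ < ε} ⊆ {z : ℂ | 0 < ‖z‖ ∧ ‖z‖ < Real.exp (-1)} :=
      fun z hz => ⟨hz.1, lt_of_lt_of_le hz.2 hε.2⟩
    have hnn : 0 ≤ ∫ z in {z : ℂ | 0 < ‖z‖ ∧ ‖z‖ < ε},
        (Real.log |Real.log ‖z‖|) ^ p * 2 / (‖z‖ * Real.log ‖z‖) ^ 2 :=
      setIntegral_nonneg (hmeasε ε) (fun z hz => hfn z hz.1 (lt_of_lt_of_le hz.2 hε.2))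
    have hle : (∫ z in {z : ℂ | 0 < ‖z‖ ∧ ‖z‖ < ε},
        (Real.log |Real.log ‖z‖|) ^ p * 2 / (‖z‖ * Real.log ‖z‖) ^ 2) ≤ C := by
      refine setIntegral_mono_set hfi ?_ (HasSubset.Subset.eventuallyLE hsub)
      rw [EventuallyLE, ae_restrict_iff' (hmeasε _)]
      filter_upwards with z hz
      exact hfn z hz.1 hz.2
    rw [Real.norm_eq_abs, abs_of_nonneg (pow_nonneg hnn k)]
    exact pow_le_pow_left₀ hnn hle k
  have hA : Tendsto (fun ε : ℝ => ∫ _θ in (0:ℝ)..(2*Real.pi),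
      (Real.log |Real.log ε|) ^ p / (ε * |Real.log ε|) * ε) (nhdsWithin 0 (Set.Ioi 0)) (nhds 0) := by
    have h1 : Tendsto (fun x : ℝ => (2*Real.pi - 0) * (Real.log x ^ p / x)) atTop (nhds 0) := by
      have h := (Real.tendsto_pow_log_div_mul_add_atTop 1 0 p one_ne_zero).const_mul
        (2*Real.pi - 0)
      simpa using h
    have h2 : Tendsto (fun ε : ℝ => -Real.log ε) (nhdsWithin 0 (Set.Ioi 0)) atTop :=
      tendsto_neg_atBot_atTop.comp Real.tendsto_log_nhdsGT_zero
    have h3 := h1.comp h2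
    refine Tendsto.congr' ?_ h3
    filter_upwards [Ioo_mem_nhdsGT_of_mem (Set.mem_Ico.2 ⟨le_refl (0:ℝ), zero_lt_one⟩)]
      with ε hε
    have hε0 : 0 < ε := hε.1
    have hlneg : Real.log ε < 0 := Real.log_neg hε0 hε.2
    simp only [Function.comp_apply]
    rw [intervalIntegral.integral_const, smul_eq_mul, abs_of_neg hlneg]
    congr 1
    rw [div_mul_eq_mul_div, mul_comm ((Real.log (-Real.log ε)) ^ p) ε,
      mul_div_mul_left _ _ hε0.ne']
  refine hA.zero_mul_isBoundedUnder_le ?_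
  refine isBoundedUnder_of_eventually_le (a := C ^ k) ?_
  filter_upwards [Ioc_mem_nhdsGT_of_mem (Set.mem_Ico.2 ⟨le_refl (0:ℝ), hr₀pos⟩)] with ε hε
  exact hBbound ε hε
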